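/- Let p ≥ q + 2 with q ≥ 1, let λ_1 > λ_2 > ... > λ_q > 0 and λ_{q+1} = ... = λ_p = 0, and set s_j = λ_j/(1 + λ_j) and s*_j = s_j²/s_{j+1}² − 1 for 1 ≤ j ≤ q − 1. For each n ∈ ℕ let λ̂_1(n), ..., λ̂_p(n) ≥ 0 satisfy |λ̂_j(n) − λ_j| ≤ K·n^{−1/2} for all n and all 1 ≤ j ≤ p, for some constant K. Let c₁(n), c₂(n) > 0 with c₁(n) → 0, c₂(n) → 0 and n·c₁(n)·c₂(n) → ∞. Set ŝ_j(n) = λ̂_j(n)/(1 + λ̂_j(n)), ŝ*_j(n) = (ŝ_j(n)² + c₁(n))/(ŝ_{j+1}(n)² + c₁(n)) − 1, and r_j(n) = (ŝ*_{j+1}(n) + c₂(n))/(ŝ*_j(n) + c₂(n)) for 1 ≤ j ≤ p − 2. Then as n → ∞: (i) if q ≥ 3, for each 1 ≤ j ≤ q − 2, r_j(n) → s*_{j+1}/s*_j, a positive finite limit; (ii) if q ≥ 2, r_{q−1}(n) → +∞; (iii) r_q(n) → 0; (iv) for each q + 1 ≤ j ≤ p − 2, r_j(n) → 1. -/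

import Mathlib

open Filter

/-- `ŝ_j = λ̂_j / (1 + λ̂_j)`. -/
noncomputable def sHat (lam : ℕ → ℝ) (j : ℕ) : ℝ := lam j / (1 + lam j)

/-- First-round ridge ratio `ŝ*_j = (ŝ_j² + c₁)/(ŝ_{j+1}² + c₁) − 1`. -/
noncomputable def sStar (lam : ℕ → ℝ) (c1 : ℝ) (j : ℕ) : ℝ :=
  ((sHat lam j) ^ 2 + c1) / ((sHat lam (j + 1)) ^ 2 + c1) - 1

/-- Second-round ridge ratio `r_j = (ŝ*_{j+1} + c₂)/(ŝ*_j + c₂)`. -/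
noncomputable def rRatio (lam : ℕ → ℝ) (c1 c2 : ℝ) (j : ℕ) : ℝ :=
  (sStar lam c1 (j + 1) + c2) / (sStar lam c1 j + c2)

/-- Population first-round ratio `s*_j = s_j²/s_{j+1}² − 1`. -/
noncomputable def sStarPop (lam : ℕ → ℝ) (j : ℕ) : ℝ :=
  (sHat lam j) ^ 2 / (sHat lam (j + 1)) ^ 2 - 1

lemma tdrr_div_helper (a b c : ℝ) (hc : c ≠ 0) :
    (a / c + 1) / (b / c + 1) = (a + c) / (b + c) := by
  rw [div_add_one hc, div_add_one hc]
  rcases eq_or_ne (b + c) 0 with hb | hb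
  · simp [hb]
  · rw [div_div_div_eq]
    rw [mul_comm c (b + c), mul_div_mul_right _ _ hc]

lemma tdrr_sqrt_atTop : Tendsto (fun n : ℕ => Real.sqrt n) atTop atTop := by
  have h := (tendsto_rpow_atTop (y := (1 : ℝ) / 2) (by norm_num)).comp
    tendsto_natCast_atTop_atTop
  refine h.congr fun n => ?_
  rw [Function.comp_apply, ← Real.sqrt_eq_rpow]

/-- Limits of the second-round (double) ridge ratios.  With population eigenvalues
`λ_1 > ... > λ_q > 0 = λ_{q+1} = ... = λ_p`, estimates `λ̂_j(n) ≥ 0` satisfying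
`|λ̂_j(n) − λ_j| ≤ K·n^{−1/2}`, ridges `c₁(n) → 0`, `c₂(n) → 0`, `n·c₁(n)·c₂(n) → ∞`:
(i) if `q ≥ 3`, for `1 ≤ j ≤ q − 2`, `r_j(n) → s*_{j+1}/s*_j`, a positive finite limit;
(ii) if `q ≥ 2`, `r_{q−1}(n) → +∞`; (iii) `r_q(n) → 0`;
(iv) for `q + 1 ≤ j ≤ p − 2`, `r_j(n) → 1`. -/
theorem rRatio_limits (p q : ℕ) (hq : 1 ≤ q) (hpq : q + 2 ≤ p)
    (lam : ℕ → ℝ)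
    (hdec : ∀ i j, 1 ≤ i → i < j → j ≤ q → lam j < lam i)
    (hpos : 0 < lam q)
    (hzero : ∀ j, q < j → j ≤ p → lam j = 0)
    (lamhat : ℕ → ℕ → ℝ)
    (hnn : ∀ n j, 1 ≤ j → j ≤ p → 0 ≤ lamhat n j)
    (K : ℝ)
    (hrate : ∀ n, 1 ≤ n → ∀ j, 1 ≤ j → j ≤ p → |lamhat n j - lam j| ≤ K / Real.sqrt n)
    (c1 c2 : ℕ → ℝ) (hc1pos : ∀ n, 0 < c1 n) (hc2pos : ∀ n, 0 < c2 n)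
    (hc1 : Tendsto c1 atTop (nhds 0)) (hc2 : Tendsto c2 atTop (nhds 0))
    (hncc : Tendsto (fun n : ℕ => (n : ℝ) * c1 n * c2 n) atTop atTop) :
    (3 ≤ q → ∀ j, 1 ≤ j → j ≤ q - 2 →
      Tendsto (fun n => rRatio (lamhat n) (c1 n) (c2 n) j) atTop
        (nhds (sStarPop lam (j + 1) / sStarPop lam j)) ∧
      0 < sStarPop lam (j + 1) / sStarPop lam j) ∧
    (2 ≤ q →
      Tendsto (fun n => rRatio (lamhat n) (c1 n) (c2 n) (q - 1)) atTop atTop) ∧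
    Tendsto (fun n => rRatio (lamhat n) (c1 n) (c2 n) q) atTop (nhds 0) ∧
    (∀ j, q + 1 ≤ j → j ≤ p - 2 →
      Tendsto (fun n => rRatio (lamhat n) (c1 n) (c2 n) j) atTop (nhds 1)) := by
  -- nonnegativity of population eigenvalues
  have hlam_pos : ∀ j, 1 ≤ j → j ≤ q → 0 < lam j := by
    intro j h1 h2
    rcases eq_or_lt_of_le h2 with h | h
    · exact h ▸ hpos
    · exact hpos.trans (hdec j q h1 h (le_refl q))
  have hlam_nn : ∀ j, 1 ≤ j → j ≤ p → 0 ≤ lam j := by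
    intro j h1 h2
    by_cases hjq : j ≤ q
    · exact (hlam_pos j h1 hjq).le
    · exact le_of_eq (hzero j (by omega) h2).symm
  -- convergence of the estimates
  have hsq : Tendsto (fun n : ℕ => Real.sqrt n) atTop atTop := tdrr_sqrt_atTop
  have hKs : Tendsto (fun n : ℕ => K / Real.sqrt n) atTop (nhds 0) :=
    tendsto_const_nhds.div_atTop hsq
  have hlht : ∀ j, 1 ≤ j → j ≤ p →
      Tendsto (fun n => lamhat n j) atTop (nhds (lam j)) := by
    intro j h1 h2
    have h0 : Tendsto (fun n => lamhat n j - lam j) atTop (nhds 0) := by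
      refine squeeze_zero_norm' ?_ hKs
      filter_upwards [eventually_ge_atTop 1] with n hn
      rw [Real.norm_eq_abs]
      exact hrate n hn j h1 h2
    have := h0.add_const (lam j)
    simpa using this
  have hsh : ∀ j, 1 ≤ j → j ≤ p →
      Tendsto (fun n => sHat (lamhat n) j) atTop (nhds (sHat lam j)) := by
    intro j h1 h2
    simp only [sHat]
    exact (hlht j h1 h2).div (tendsto_const_nhds.add (hlht j h1 h2))
      (by have := hlam_nn j h1 h2; intro h; linarith)
  -- population s values
  have hs_pos : ∀ j, 1 ≤ j → j ≤ q → 0 < sHat lam j := by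
    intro j h1 h2
    have := hlam_pos j h1 h2
    exact div_pos this (by linarith)
  have hs_lt : ∀ j, 1 ≤ j → j + 1 ≤ q → sHat lam (j + 1) < sHat lam j := by
    intro j h1 h2
    have ha : 0 < lam (j + 1) := hlam_pos (j + 1) (by omega) h2
    have hb : lam (j + 1) < lam j := hdec j (j + 1) h1 (by omega) h2
    have h1a : (0:ℝ) < 1 + lam (j + 1) := by linarith
    have h1b : (0:ℝ) < 1 + lam j := by linarith
    rw [sHat, sHat, div_lt_div_iff₀ h1a h1b]
    nlinarith
  have hpop_pos : ∀ j, 1 ≤ j → j + 1 ≤ q → 0 < sStarPop lam j := by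
    intro j h1 h2
    have hs1 := hs_pos (j + 1) (by omega) h2
    have hsj := hs_pos j h1 (by omega)
    have hlt := hs_lt j h1 h2
    have : sHat lam (j + 1) ^ 2 < sHat lam j ^ 2 := by nlinarith
    have h1' : (1:ℝ) < sHat lam j ^ 2 / sHat lam (j + 1) ^ 2 :=
      (one_lt_div (by positivity)).2 this
    simp only [sStarPop]
    linarith
  -- first-round limits in the signal range
  have hsStar_t : ∀ j, 1 ≤ j → j + 1 ≤ q →
      Tendsto (fun n => sStar (lamhat n) (c1 n) j) atTop (nhds (sStarPop lam j)) := by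
    intro j h1 h2
    have hnum : Tendsto (fun n => (sHat (lamhat n) j) ^ 2 + c1 n) atTop
        (nhds ((sHat lam j) ^ 2 + 0)) :=
      ((hsh j h1 (by omega)).pow 2).add hc1
    have hden : Tendsto (fun n => (sHat (lamhat n) (j + 1)) ^ 2 + c1 n) atTop
        (nhds ((sHat lam (j + 1)) ^ 2 + 0)) :=
      ((hsh (j + 1) (by omega) (by omega)).pow 2).add hc1
    have hne : (sHat lam (j + 1)) ^ 2 + 0 ≠ 0 := by
      have := hs_pos (j + 1) (by omega) h2
      positivity
    have := (hnum.div hden hne).sub_const 1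
    simp only [sStar, sStarPop, add_zero] at this ⊢
    exact this
  -- sHat of the estimate at a null index, squared, is ≤ K²/n
  have htail : ∀ j, q + 1 ≤ j → j ≤ p → ∀ n : ℕ, 1 ≤ n →
      (sHat (lamhat n) j) ^ 2 ≤ K ^ 2 / n := by
    intro j h1 h2 n hn
    have hnn' : 0 ≤ lamhat n j := hnn n j (by omega) h2
    have hl0 : lam j = 0 := hzero j (by omega) h2
    have hb : lamhat n j ≤ K / Real.sqrt n := by
      have := hrate n hn j (by omega) h2
      rw [hl0, sub_zero, abs_of_nonneg hnn'] at this
      exact this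
    have hsle : sHat (lamhat n) j ≤ lamhat n j := by
      simp only [sHat]
      exact div_le_self hnn' (by linarith)
    have hsnn : 0 ≤ sHat (lamhat n) j := div_nonneg hnn' (by linarith)
    have h3 : sHat (lamhat n) j ≤ K / Real.sqrt n := hsle.trans hb
    have h4 : (sHat (lamhat n) j) ^ 2 ≤ (K / Real.sqrt n) ^ 2 := by
      nlinarith
    have hn0 : (0:ℝ) ≤ (n : ℝ) := Nat.cast_nonneg n
    have h5 : (K / Real.sqrt n) ^ 2 = K ^ 2 / n := by
      rw [div_pow, Real.sq_sqrt hn0]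
    linarith [h4, h5 ▸ h4]
  -- bound on the first-round ratios in the noise range
  have hsb : ∀ j, q + 1 ≤ j → j + 1 ≤ p → ∀ n : ℕ, 1 ≤ n →
      |sStar (lamhat n) (c1 n) j| ≤ K ^ 2 / ((n : ℝ) * c1 n) := by
    intro j h1 h2 n hn
    set a := (sHat (lamhat n) j) ^ 2 with ha
    set b := (sHat (lamhat n) (j + 1)) ^ 2 with hb
    have ha0 : 0 ≤ a := sq_nonneg _
    have hb0 : 0 ≤ b := sq_nonneg _
    have haK : a ≤ K ^ 2 / n := htail j h1 (by omega) n hn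
    have hbK : b ≤ K ^ 2 / n := htail (j + 1) (by omega) h2 n hn
    have hc : 0 < c1 n := hc1pos n
    have hbc : 0 < b + c1 n := by linarith
    have heq : sStar (lamhat n) (c1 n) j = (a - b) / (b + c1 n) := by
      simp only [sStar, ← ha, ← hb]
      field_simp
      ring
    rw [heq, abs_div, abs_of_pos hbc]
    have habs : |a - b| ≤ K ^ 2 / n := by
      rw [abs_sub_le_iff]
      constructor <;> linarith
    have hnpos : (0:ℝ) < n := by exact_mod_cast hn
    calc |a - b| / (b + c1 n) ≤ (K ^ 2 / n) / c1 n := by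
          apply div_le_div₀ (by positivity) habs hc (by linarith)
      _ = K ^ 2 / ((n : ℝ) * c1 n) := by rw [div_div]
  -- n·c₁ → ∞
  have hnc1 : Tendsto (fun n : ℕ => (n : ℝ) * c1 n) atTop atTop := by
    apply tendsto_atTop_mono' atTop ?_ hncc
    filter_upwards [hc2.eventually (gt_mem_nhds (show (0:ℝ) < 1 by norm_num)),
      eventually_ge_atTop 1] with n h1 hn
    have hn0 : (0:ℝ) < n := by exact_mod_cast hn
    have := hc1pos n
    have h2 := (hc2pos n).le
    nlinarith [mul_pos hn0 this, mul_nonneg (mul_nonneg hn0.le this.le) h2]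
  have hbound1 : Tendsto (fun n : ℕ => K ^ 2 / ((n : ℝ) * c1 n)) atTop (nhds 0) :=
    tendsto_const_nhds.div_atTop hnc1
  have hbound2 : Tendsto (fun n : ℕ => K ^ 2 / ((n : ℝ) * c1 n * c2 n)) atTop (nhds 0) :=
    tendsto_const_nhds.div_atTop hncc
  -- first-round ratios in the noise range tend to 0
  have hsStar0 : ∀ j, q + 1 ≤ j → j + 1 ≤ p →
      Tendsto (fun n => sStar (lamhat n) (c1 n) j) atTop (nhds 0) := by
    intro j h1 h2
    refine squeeze_zero_norm' ?_ hbound1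
    filter_upwards [eventually_ge_atTop 1] with n hn
    rw [Real.norm_eq_abs]
    exact hsb j h1 h2 n hn
  -- first-round ratios in the noise range, divided by c₂, tend to 0
  have hsStarc2 : ∀ j, q + 1 ≤ j → j + 1 ≤ p →
      Tendsto (fun n => sStar (lamhat n) (c1 n) j / c2 n) atTop (nhds 0) := by
    intro j h1 h2
    refine squeeze_zero_norm' ?_ hbound2
    filter_upwards [eventually_ge_atTop 1] with n hn
    rw [Real.norm_eq_abs, abs_div, abs_of_pos (hc2pos n)]
    calc |sStar (lamhat n) (c1 n) j| / c2 n
        ≤ (K ^ 2 / ((n : ℝ) * c1 n)) / c2 n :=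
          (div_le_div_iff_of_pos_right (hc2pos n)).2 (hsb j h1 h2 n hn)
      _ = K ^ 2 / ((n : ℝ) * c1 n * c2 n) := by rw [div_div]
  -- first-round ratio at q tends to +∞
  have hsHatq1 : sHat lam (q + 1) = 0 := by
    simp [sHat, hzero (q + 1) (by omega) (by omega)]
  have hsStarq : Tendsto (fun n => sStar (lamhat n) (c1 n) q) atTop atTop := by
    have hnum : Tendsto (fun n => (sHat (lamhat n) q) ^ 2 + c1 n) atTop
        (nhds ((sHat lam q) ^ 2 + 0)) :=
      ((hsh q hq (by omega)).pow 2).add hc1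
    have hnum_pos : 0 < (sHat lam q) ^ 2 + 0 := by
      have := hs_pos q hq (le_refl q)
      positivity
    have hden0 : Tendsto (fun n => (sHat (lamhat n) (q + 1)) ^ 2 + c1 n) atTop
        (nhds 0) := by
      have := ((hsh (q + 1) (by omega) (by omega)).pow 2).add hc1
      rw [hsHatq1] at this
      simpa using this
    have hdenpos : ∀ n, 0 < (sHat (lamhat n) (q + 1)) ^ 2 + c1 n := fun n => by
      have := hc1pos n; positivity
    have hd : Tendsto (fun n => (sHat (lamhat n) (q + 1)) ^ 2 + c1 n) atTop
        (nhdsWithin 0 (Set.Ioi 0)) :=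
      tendsto_nhdsWithin_of_tendsto_nhds_of_eventually_within _ hden0
        (Eventually.of_forall fun n => hdenpos n)
    have hinv : Tendsto (fun n => ((sHat (lamhat n) (q + 1)) ^ 2 + c1 n)⁻¹) atTop atTop :=
      tendsto_inv_nhdsGT_zero.comp hd
    have hdiv : Tendsto (fun n => ((sHat (lamhat n) q) ^ 2 + c1 n) /
        ((sHat (lamhat n) (q + 1)) ^ 2 + c1 n)) atTop atTop := by
      simp only [div_eq_mul_inv]
      exact Tendsto.pos_mul_atTop hnum_pos hnum hinv
    simp only [sStar, sub_eq_add_neg]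
    exact tendsto_atTop_add_const_right _ (-1) hdiv
  have hsStarq_c2 : Tendsto (fun n => sStar (lamhat n) (c1 n) q + c2 n) atTop atTop := by
    apply tendsto_atTop_mono (fun n => le_add_of_nonneg_right (hc2pos n).le) hsStarq
  refine ⟨?_, ?_, ?_, ?_⟩
  · -- (i)
    intro h3 j hj1 hj2
    have ht2 : Tendsto (fun n => sStar (lamhat n) (c1 n) j) atTop
        (nhds (sStarPop lam j)) := hsStar_t j hj1 (by omega)
    have ht1 : Tendsto (fun n => sStar (lamhat n) (c1 n) (j + 1)) atTop
        (nhds (sStarPop lam (j + 1))) := hsStar_t (j + 1) (by omega) (by omega)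
    have hp2 : 0 < sStarPop lam j := hpop_pos j hj1 (by omega)
    have hp1 : 0 < sStarPop lam (j + 1) := hpop_pos (j + 1) (by omega) (by omega)
    constructor
    · have h := (ht1.add hc2).div (ht2.add hc2) (by rw [add_zero]; exact hp2.ne')
      rw [add_zero, add_zero] at h
      exact h
    · exact div_pos hp1 hp2
  · -- (ii)
    intro h2q
    have hq1 : q - 1 + 1 = q := by omega
    have hden : Tendsto (fun n => sStar (lamhat n) (c1 n) (q - 1) + c2 n) atTop
        (nhds (sStarPop lam (q - 1) + 0)) :=
      (hsStar_t (q - 1) (by omega) (by omega)).add hc2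
    have hdp : 0 < sStarPop lam (q - 1) + 0 := by
      rw [add_zero]; exact hpop_pos (q - 1) (by omega) (by omega)
    have hinv : Tendsto (fun n => (sStar (lamhat n) (c1 n) (q - 1) + c2 n)⁻¹) atTop
        (nhds ((sStarPop lam (q - 1) + 0)⁻¹)) := hden.inv₀ hdp.ne'
    have := Tendsto.atTop_mul_pos (by positivity) hsStarq_c2 hinv
    simp only [rRatio, hq1, div_eq_mul_inv]
    exact this
  · -- (iii)
    have hnum : Tendsto (fun n => sStar (lamhat n) (c1 n) (q + 1) + c2 n) atTop
        (nhds 0) := by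
      have := (hsStar0 (q + 1) (le_refl _) (by omega)).add hc2
      simpa using this
    have := hnum.div_atTop hsStarq_c2
    simpa only [rRatio] using this
  · -- (iv)
    intro j hj1 hj2
    have h1 : Tendsto (fun n => sStar (lamhat n) (c1 n) (j + 1) / c2 n + 1) atTop
        (nhds 1) := by
      have := (hsStarc2 (j + 1) (by omega) (by omega)).add_const 1
      simpa using this
    have h2 : Tendsto (fun n => sStar (lamhat n) (c1 n) j / c2 n + 1) atTop
        (nhds 1) := by
      have := (hsStarc2 j hj1 (by omega)).add_const 1
      simpa using this
    have h := h1.div h2 one_ne_zero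
    rw [div_one] at h
    refine h.congr fun n => ?_
    simp only [rRatio]
    exact tdrr_div_helper _ _ _ (hc2pos n).ne'
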